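/- Let r, s be positive integers, θ, θ̂ ∈ ℝ^r, W ∈ ℝ^{s×r}, η ∈ ℝ^s, and κ ∈ (0,2). Define ν := 1 + tr(Wᵀ W), Y := W θ + η, e := (Y − W θ̂)/ν, and θ̄ := θ̂ + κ Wᵀ e. Then ‖θ − θ̄‖² ≤ ‖θ − θ̂‖² − κ(2−κ) ν ‖e‖² + 2κ ⟨η, e⟩, where ‖·‖ is the Euclidean norm and ⟨·,·⟩ the Euclidean inner product. -/

import Mathlib

open Matrix

lemma aux_adj (r s : ℕ) (W : Matrix (Fin s) (Fin r) ℝ) (x : EuclideanSpace ℝ (Fin r)) (y : EuclideanSpace ℝ (Fin s)) :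
    (inner ℝ (Matrix.toEuclideanLin W x) y : ℝ) = inner ℝ x (Matrix.toEuclideanLin Wᵀ y) := by
  simp [Matrix.toEuclideanLin_apply, PiLp.inner_apply, Matrix.mulVec, dotProduct,
    Finset.mul_sum, Finset.sum_mul, PiLp.toLp_apply]
  rw [Finset.sum_comm]
  exact Finset.sum_congr rfl fun a _ => Finset.sum_congr rfl fun b _ => by ring

lemma aux_tr (r s : ℕ) (W : Matrix (Fin s) (Fin r) ℝ) : 0 ≤ (Wᵀ*W).trace := by
  simp only [Matrix.trace, Matrix.diag, Matrix.mul_apply, Matrix.transpose_apply]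
  exact Finset.sum_nonneg fun j _ => Finset.sum_nonneg fun i _ => mul_self_nonneg _

lemma aux_norm (r s : ℕ) (W : Matrix (Fin s) (Fin r) ℝ) (e : EuclideanSpace ℝ (Fin s)) :
    ‖Matrix.toEuclideanLin Wᵀ e‖^2 ≤ (Wᵀ*W).trace * ‖e‖^2 := by
  rw [← real_inner_self_eq_norm_sq, ← real_inner_self_eq_norm_sq]
  simp only [PiLp.inner_apply, RCLike.inner_apply, conj_trivial, Matrix.toEuclideanLin_apply,
    Matrix.trace, Matrix.diag, Matrix.mul_apply, Matrix.transpose_apply, Matrix.mulVec,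
    dotProduct, PiLp.toLp_apply]
  rw [Finset.sum_mul]
  apply Finset.sum_le_sum
  intro j _
  calc (∑ i, W i j * e i) * (∑ i, W i j * e i) = (∑ i, W i j * e i)^2 := (sq _).symm
    _ ≤ (∑ i, (W i j)^2) * ∑ i, (e i)^2 := Finset.sum_mul_sq_le_sq_mul_sq _ _ _
    _ = (∑ i, W i j * W i j) * ∑ i, e i * e i := by simp [sq]

set_option maxHeartbeats 800000 in
open Matrix in
theorem stmt6 (r s : ℕ) (hr : 0 < r) (hs : 0 < s)
    (θ θhat : EuclideanSpace ℝ (Fin r)) (W : Matrix (Fin s) (Fin r) ℝ)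
    (η : EuclideanSpace ℝ (Fin s)) (κ : ℝ) (hκ : κ ∈ Set.Ioo (0 : ℝ) 2)
    (ν : ℝ) (hν : ν = 1 + Matrix.trace (Wᵀ * W))
    (Y : EuclideanSpace ℝ (Fin s)) (hY : Y = Matrix.toEuclideanLin W θ + η)
    (e : EuclideanSpace ℝ (Fin s))
    (he : e = ν⁻¹ • (Y - Matrix.toEuclideanLin W θhat))
    (θbar : EuclideanSpace ℝ (Fin r))
    (hθbar : θbar = θhat + κ • Matrix.toEuclideanLin Wᵀ e) :
    ‖θ - θbar‖ ^ 2 ≤ ‖θ - θhat‖ ^ 2 - κ * (2 - κ) * ν * ‖e‖ ^ 2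
      + 2 * κ * (inner ℝ η e : ℝ) := by
  have htr : 0 ≤ (Wᵀ*W).trace := aux_tr r s W
  have hνpos : 0 < ν := by rw [hν]; linarith
  set u : EuclideanSpace ℝ (Fin r) := Matrix.toEuclideanLin Wᵀ e with hu
  set d : EuclideanSpace ℝ (Fin r) := θ - θhat with hd
  have hνe : ν • e = Y - Matrix.toEuclideanLin W θhat := by
    rw [he, smul_smul, mul_inv_cancel₀ hνpos.ne', one_smul]
  have hWd : Matrix.toEuclideanLin W d = ν • e - η := by
    rw [hd, map_sub, hνe, hY]; abel
  have hinner : (inner ℝ d u : ℝ) = ν * ‖e‖^2 - (inner ℝ η e : ℝ) := by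
    rw [hu, ← aux_adj, hWd, inner_sub_left, real_inner_smul_left,
      real_inner_self_eq_norm_sq]
  have hsub : θ - θbar = d - κ • u := by rw [hθbar, hd]; abel
  have hexp : ‖θ - θbar‖^2 = ‖d‖^2 - 2 * (κ * (inner ℝ d u : ℝ)) + κ^2 * ‖u‖^2 := by
    rw [hsub, norm_sub_sq_real, real_inner_smul_right, norm_smul, mul_pow,
      Real.norm_eq_abs, sq_abs]
  have hub : ‖u‖^2 ≤ (Wᵀ*W).trace * ‖e‖^2 := aux_norm r s W e
  have he2 : (0:ℝ) ≤ ‖e‖^2 := sq_nonneg _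
  obtain ⟨hκ0, hκ2⟩ := hκ
  have hb : κ^2 * ‖u‖^2 ≤ κ^2 * (ν * ‖e‖^2) := by
    have h1 : (Wᵀ*W).trace * ‖e‖^2 ≤ ν * ‖e‖^2 := by nlinarith
    nlinarith [sq_nonneg κ]
  rw [hexp, hinner]
  nlinarith [hb]
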